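/- Let p₁, p₂ ∈ ℂ[t] be monic polynomials, let d_j = deg p_j + 1, and let p̂_j(t) = t^{d_j−1}·p_j(1/t) be the reversed polynomials (these are genuine polynomials with p̂_j(0) = 1). Let R = ℂ[x₁,x₂,y₁,y₂]/(y₁x₁^{d₁} − x₂ + p̂₁(x₁), y₂x₂^{d₂} − x₁ + p̂₂(x₂)). Then the localization of R at the element x₁·x₂ is isomorphic as a ℂ-algebra to the Laurent polynomial ring ℂ[v₁^{±1}, v₂^{±1}], via v_j ↦ x_j, with inverse given by x_j ↦ v_j and y_j ↦ (v_{3−j} − p̂_j(v_j))·v_j^{−d_j} for j = 1, 2. -/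

import Mathlib

open MvPolynomial AddMonoidAlgebra

noncomputable section

/-- Relations defining the coordinate ring of `S_{p₁,p₂} ⊆ ℂ⁴`:
variables `x₁ = X 0`, `x₂ = X 1`, `y₁ = X 2`, `y₂ = X 3`;
`p̂ⱼ(t) = t^(dⱼ-1)·pⱼ(1/t)` is `pⱼ.reverse`. -/
abbrev srel (p₁ p₂ : Polynomial ℂ) (d₁ d₂ : ℕ) : Set (MvPolynomial (Fin 4) ℂ) :=
  {X 2 * X 0 ^ d₁ - X 1 + Polynomial.aeval (X 0) p₁.reverse,
   X 3 * X 1 ^ d₂ - X 0 + Polynomial.aeval (X 1) p₂.reverse}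

/-- The coordinate ring `R` of `S_{p₁,p₂}`. -/
abbrev SRing (p₁ p₂ : Polynomial ℂ) (d₁ d₂ : ℕ) : Type :=
  MvPolynomial (Fin 4) ℂ ⧸ Ideal.span (srel p₁ p₂ d₁ d₂)

/-- The Laurent polynomial ring `ℂ[v₁^{±1}, v₂^{±1}]`; the monomial `v₁^a·v₂^b`
is `AddMonoidAlgebra.single (a, b) 1`. -/
abbrev Laurent2 : Type := AddMonoidAlgebra ℂ (ℤ × ℤ)

set_option maxHeartbeats 1000000
set_option synthInstance.maxHeartbeats 400000

namespace Stmt1Aux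

def unitsHom : Multiplicative (ℤ × ℤ) →* Laurent2ˣ :=
  MonoidHom.mk' (fun s => ⟨single s.toAdd 1, single (-s.toAdd) 1,
      by simp [AddMonoidAlgebra.single_mul_single, AddMonoidAlgebra.one_def],
      by simp [AddMonoidAlgebra.single_mul_single, AddMonoidAlgebra.one_def]⟩)
    (fun a b => by ext; simp [AddMonoidAlgebra.single_mul_single, AddMonoidAlgebra.one_def])

lemma unitsHom_coe (s : ℤ × ℤ) : (unitsHom (Multiplicative.ofAdd s) : Laurent2) = single s 1 := rfl

lemma unitsHom_zpow (s : ℤ × ℤ) (a : ℤ) :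
    ((unitsHom (Multiplicative.ofAdd s)) ^ a : Laurent2ˣ)
      = unitsHom (Multiplicative.ofAdd (a • s)) := by
  rw [← map_zpow, ofAdd_zsmul]

variable (p₁ p₂ : Polynomial ℂ) (d₁ d₂ : ℕ)

abbrev tgen : SRing p₁ p₂ d₁ d₂ := Ideal.Quotient.mk (Ideal.span (srel p₁ p₂ d₁ d₂)) (X 0 * X 1)

abbrev SLoc : Type := Localization.Away (tgen p₁ p₂ d₁ d₂)

def xim (i : Fin 4) : SLoc p₁ p₂ d₁ d₂ :=
  algebraMap (SRing p₁ p₂ d₁ d₂) _ (Ideal.Quotient.mk _ (X i))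

lemma hx01 : IsUnit (xim p₁ p₂ d₁ d₂ 0 * xim p₁ p₂ d₁ d₂ 1) := by
  have h := IsLocalization.Away.algebraMap_isUnit (S := SLoc p₁ p₂ d₁ d₂) (tgen p₁ p₂ d₁ d₂)
  have h2 : xim p₁ p₂ d₁ d₂ 0 * xim p₁ p₂ d₁ d₂ 1
      = algebraMap (SRing p₁ p₂ d₁ d₂) (SLoc p₁ p₂ d₁ d₂) (tgen p₁ p₂ d₁ d₂) := by
    rw [xim, xim, ← RingHom.map_mul, ← RingHom.map_mul]
  rw [h2]; exact h

lemma hx0 : IsUnit (xim p₁ p₂ d₁ d₂ 0) := isUnit_of_mul_isUnit_left (hx01 p₁ p₂ d₁ d₂)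
lemma hx1 : IsUnit (xim p₁ p₂ d₁ d₂ 1) := isUnit_of_mul_isUnit_right (hx01 p₁ p₂ d₁ d₂)

/-- the monoid hom `(a,b) ↦ x₁^a x₂^b` into units of the localization. -/
def φ : Multiplicative (ℤ × ℤ) →* (SLoc p₁ p₂ d₁ d₂)ˣ :=
  MonoidHom.mk' (fun s => (hx0 p₁ p₂ d₁ d₂).unit ^ s.toAdd.1 * (hx1 p₁ p₂ d₁ d₂).unit ^ s.toAdd.2)
    (fun a b => by
      rw [toAdd_mul, Prod.fst_add, Prod.snd_add, zpow_add, zpow_add]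
      exact mul_mul_mul_comm _ _ _ _)

def F : Laurent2 →ₐ[ℂ] SLoc p₁ p₂ d₁ d₂ :=
  (AddMonoidAlgebra.lift ℂ _ (ℤ × ℤ)) ((Units.coeHom _).comp (φ p₁ p₂ d₁ d₂))

lemma F_single (s : ℤ × ℤ) :
    F p₁ p₂ d₁ d₂ (single s 1) =
      ((hx0 p₁ p₂ d₁ d₂).unit ^ s.1 * (hx1 p₁ p₂ d₁ d₂).unit ^ s.2 : (SLoc p₁ p₂ d₁ d₂)ˣ) := by
  rw [F, AddMonoidAlgebra.lift_single, one_smul]; rfl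

/-- assignment of the four variables -/
def v : Fin 4 → Laurent2 :=
  ![single ((1:ℤ), (0:ℤ)) 1, single ((0:ℤ), (1:ℤ)) 1,
    (single ((0:ℤ), (1:ℤ)) 1 - Polynomial.aeval (single ((1:ℤ), (0:ℤ)) 1 : Laurent2) p₁.reverse)
      * single (-(d₁:ℤ), (0:ℤ)) 1,
    (single ((1:ℤ), (0:ℤ)) 1 - Polynomial.aeval (single ((0:ℤ), (1:ℤ)) 1 : Laurent2) p₂.reverse)
      * single ((0:ℤ), -(d₂:ℤ)) 1]

lemma gker : ∀ a ∈ Ideal.span (srel p₁ p₂ d₁ d₂), aeval (v p₁ p₂ d₁ d₂) a = 0 := by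
  have h : Ideal.span (srel p₁ p₂ d₁ d₂)
      ≤ RingHom.ker (MvPolynomial.aeval (R := ℂ) (v p₁ p₂ d₁ d₂)).toRingHom := by
    rw [Ideal.span_le]
    intro x hx
    simp only [Set.mem_insert_iff, Set.mem_singleton_iff] at hx
    simp only [SetLike.mem_coe, RingHom.mem_ker, AlgHom.toRingHom_eq_coe, RingHom.coe_coe]
    rcases hx with rfl | rfl <;>
    · simp only [map_add, map_sub, map_mul, map_pow, aeval_X, ← Polynomial.aeval_algHom_apply]
      simp only [v, Matrix.cons_val_zero, Matrix.cons_val_one, Matrix.head_cons,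
        Matrix.cons_val_two, Matrix.tail_cons, Matrix.cons_val_three]
      rw [AddMonoidAlgebra.single_pow, one_pow, mul_assoc, AddMonoidAlgebra.single_mul_single]
      simp only [Prod.smul_mk, Prod.mk_add_mk, nsmul_eq_mul, mul_one, smul_zero,
        neg_add_cancel, add_zero, zero_add]
      have h1 : (single ((0:ℤ),(0:ℤ)) (1:ℂ) : Laurent2) = 1 := rfl
      rw [h1]
      ring
  exact fun a ha => h ha

def Gbar : SRing p₁ p₂ d₁ d₂ →ₐ[ℂ] Laurent2 :=
  Ideal.Quotient.liftₐ _ (aeval (v p₁ p₂ d₁ d₂)) (gker p₁ p₂ d₁ d₂)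

lemma Gbar_t_isUnit : ∀ y : Submonoid.powers (tgen p₁ p₂ d₁ d₂),
    IsUnit (Gbar p₁ p₂ d₁ d₂ y) := by
  rintro ⟨y, n, rfl⟩
  simp only [map_pow]
  refine IsUnit.pow _ ?_
  have : Gbar p₁ p₂ d₁ d₂ (tgen p₁ p₂ d₁ d₂) = (unitsHom (Multiplicative.ofAdd ((1:ℤ),(1:ℤ))) : Laurent2) := by
    show aeval (v p₁ p₂ d₁ d₂) (X 0 * X 1) = _
    rw [map_mul, aeval_X, aeval_X, unitsHom_coe]
    simp [v, AddMonoidAlgebra.single_mul_single]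
  rw [this]
  exact (unitsHom _).isUnit

def G : SLoc p₁ p₂ d₁ d₂ →ₐ[ℂ] Laurent2 :=
  IsLocalization.liftAlgHom (M := Submonoid.powers (tgen p₁ p₂ d₁ d₂))
    (S := SLoc p₁ p₂ d₁ d₂) (f := Gbar p₁ p₂ d₁ d₂) (Gbar_t_isUnit p₁ p₂ d₁ d₂)

lemma G_xim (i : Fin 4) : G p₁ p₂ d₁ d₂ (xim p₁ p₂ d₁ d₂ i) = v p₁ p₂ d₁ d₂ i := by
  rw [G, xim, IsLocalization.liftAlgHom_apply, IsLocalization.lift_eq]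
  show aeval _ (X i) = _
  rw [aeval_X]

/-- composite `MvPolynomial → SRing → SLoc` as a `ℂ`-algebra hom. -/
def ξ : MvPolynomial (Fin 4) ℂ →ₐ[ℂ] SLoc p₁ p₂ d₁ d₂ :=
  (IsScalarTower.toAlgHom ℂ (SRing p₁ p₂ d₁ d₂) (SLoc p₁ p₂ d₁ d₂)).comp
    (Ideal.Quotient.mkₐ ℂ _)

lemma ξ_X (i : Fin 4) : ξ p₁ p₂ d₁ d₂ (X i) = xim p₁ p₂ d₁ d₂ i := rfl

lemma rel1 : xim p₁ p₂ d₁ d₂ 2 * xim p₁ p₂ d₁ d₂ 0 ^ d₁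
    = xim p₁ p₂ d₁ d₂ 1 - Polynomial.aeval (xim p₁ p₂ d₁ d₂ 0) p₁.reverse := by
  have hz : ξ p₁ p₂ d₁ d₂ (X 2 * X 0 ^ d₁ - X 1 + Polynomial.aeval (X 0) p₁.reverse) = 0 := by
    rw [ξ, AlgHom.comp_apply]
    have : (Ideal.Quotient.mkₐ ℂ (Ideal.span (srel p₁ p₂ d₁ d₂)))
        (X 2 * X 0 ^ d₁ - X 1 + Polynomial.aeval (X 0) p₁.reverse) = 0 :=
      Ideal.Quotient.eq_zero_iff_mem.2 (Ideal.subset_span (by left; rfl))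
    rw [this, map_zero]
  rw [map_add, map_sub, map_mul, map_pow, ← Polynomial.aeval_algHom_apply] at hz
  rw [ξ_X, ξ_X, ξ_X] at hz
  have h3 := sub_eq_zero.mpr (Eq.refl (0 : SLoc p₁ p₂ d₁ d₂))
  have h4 : xim p₁ p₂ d₁ d₂ 2 * xim p₁ p₂ d₁ d₂ 0 ^ d₁
      - (xim p₁ p₂ d₁ d₂ 1
        - Polynomial.aeval (xim p₁ p₂ d₁ d₂ 0) p₁.reverse) = 0 := by
    rw [← hz]; ring
  exact sub_eq_zero.mp h4

lemma rel2 : xim p₁ p₂ d₁ d₂ 3 * xim p₁ p₂ d₁ d₂ 1 ^ d₂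
    = xim p₁ p₂ d₁ d₂ 0 - Polynomial.aeval (xim p₁ p₂ d₁ d₂ 1) p₂.reverse := by
  have hz : ξ p₁ p₂ d₁ d₂ (X 3 * X 1 ^ d₂ - X 0 + Polynomial.aeval (X 1) p₂.reverse) = 0 := by
    rw [ξ, AlgHom.comp_apply]
    have : (Ideal.Quotient.mkₐ ℂ (Ideal.span (srel p₁ p₂ d₁ d₂)))
        (X 3 * X 1 ^ d₂ - X 0 + Polynomial.aeval (X 1) p₂.reverse) = 0 :=
      Ideal.Quotient.eq_zero_iff_mem.2 (Ideal.subset_span (by right; rfl))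
    rw [this, map_zero]
  rw [map_add, map_sub, map_mul, map_pow, ← Polynomial.aeval_algHom_apply] at hz
  rw [ξ_X, ξ_X, ξ_X] at hz
  have h3 := sub_eq_zero.mpr (Eq.refl (0 : SLoc p₁ p₂ d₁ d₂))
  have h4 : xim p₁ p₂ d₁ d₂ 3 * xim p₁ p₂ d₁ d₂ 1 ^ d₂
      - (xim p₁ p₂ d₁ d₂ 0
        - Polynomial.aeval (xim p₁ p₂ d₁ d₂ 1) p₂.reverse) = 0 := by
    rw [← hz]; ring
  exact sub_eq_zero.mp h4

lemma u0_spec : ((hx0 p₁ p₂ d₁ d₂).unit : SLoc p₁ p₂ d₁ d₂) = xim p₁ p₂ d₁ d₂ 0 :=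
  (hx0 p₁ p₂ d₁ d₂).unit_spec
lemma u1_spec : ((hx1 p₁ p₂ d₁ d₂).unit : SLoc p₁ p₂ d₁ d₂) = xim p₁ p₂ d₁ d₂ 1 :=
  (hx1 p₁ p₂ d₁ d₂).unit_spec

lemma F_v (i : Fin 4) : F p₁ p₂ d₁ d₂ (v p₁ p₂ d₁ d₂ i) = xim p₁ p₂ d₁ d₂ i := by
  fin_cases i
  · show F p₁ p₂ d₁ d₂ (v p₁ p₂ d₁ d₂ 0) = xim p₁ p₂ d₁ d₂ 0
    rw [show v p₁ p₂ d₁ d₂ 0 = single ((1:ℤ),(0:ℤ)) 1 from rfl, F_single]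
    simp [u0_spec]
  · show F p₁ p₂ d₁ d₂ (v p₁ p₂ d₁ d₂ 1) = xim p₁ p₂ d₁ d₂ 1
    rw [show v p₁ p₂ d₁ d₂ 1 = single ((0:ℤ),(1:ℤ)) 1 from rfl, F_single]
    simp [u1_spec]
  · show F p₁ p₂ d₁ d₂ (v p₁ p₂ d₁ d₂ 2) = xim p₁ p₂ d₁ d₂ 2
    rw [show v p₁ p₂ d₁ d₂ 2 = (single ((0:ℤ),(1:ℤ)) 1
        - Polynomial.aeval (single ((1:ℤ),(0:ℤ)) 1 : Laurent2) p₁.reverse)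
        * single (-(d₁:ℤ),(0:ℤ)) 1 from rfl]
    rw [map_mul, map_sub, ← Polynomial.aeval_algHom_apply, F_single, F_single, F_single]
    simp only [zpow_zero, zpow_one, one_mul, mul_one]
    rw [u0_spec, u1_spec, ← rel1, mul_assoc]
    have e1 : ((((hx0 p₁ p₂ d₁ d₂).unit ^ (d₁:ℤ)) : (SLoc p₁ p₂ d₁ d₂)ˣ) : SLoc p₁ p₂ d₁ d₂)
        = xim p₁ p₂ d₁ d₂ 0 ^ d₁ := by
      rw [zpow_natCast, Units.val_pow_eq_pow_val, u0_spec]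
    rw [← e1, ← Units.val_mul, ← zpow_add]
    simp
  · show F p₁ p₂ d₁ d₂ (v p₁ p₂ d₁ d₂ 3) = xim p₁ p₂ d₁ d₂ 3
    rw [show v p₁ p₂ d₁ d₂ 3 = (single ((1:ℤ),(0:ℤ)) 1
        - Polynomial.aeval (single ((0:ℤ),(1:ℤ)) 1 : Laurent2) p₂.reverse)
        * single ((0:ℤ),-(d₂:ℤ)) 1 from rfl]
    rw [map_mul, map_sub, ← Polynomial.aeval_algHom_apply, F_single, F_single, F_single]
    simp only [zpow_zero, zpow_one, one_mul, mul_one]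
    rw [u0_spec, u1_spec, ← rel2, mul_assoc]
    have e1 : ((((hx1 p₁ p₂ d₁ d₂).unit ^ (d₂:ℤ)) : (SLoc p₁ p₂ d₁ d₂)ˣ) : SLoc p₁ p₂ d₁ d₂)
        = xim p₁ p₂ d₁ d₂ 1 ^ d₂ := by
      rw [zpow_natCast, Units.val_pow_eq_pow_val, u1_spec]
    rw [← e1, ← Units.val_mul, ← zpow_add]
    simp

lemma hFG : (F p₁ p₂ d₁ d₂).comp (G p₁ p₂ d₁ d₂) = AlgHom.id ℂ (SLoc p₁ p₂ d₁ d₂) := by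
  have key : ((F p₁ p₂ d₁ d₂).comp (G p₁ p₂ d₁ d₂)).comp (ξ p₁ p₂ d₁ d₂) = ξ p₁ p₂ d₁ d₂ := by
    apply MvPolynomial.algHom_ext
    intro i
    rw [AlgHom.comp_apply, AlgHom.comp_apply, ξ_X, G_xim, F_v]
  have h : ((F p₁ p₂ d₁ d₂).comp (G p₁ p₂ d₁ d₂)).toRingHom = (AlgHom.id ℂ _).toRingHom := by
    refine IsLocalization.ringHom_ext (R := SRing p₁ p₂ d₁ d₂) (S := SLoc p₁ p₂ d₁ d₂)
      (P := SLoc p₁ p₂ d₁ d₂) (Submonoid.powers (tgen p₁ p₂ d₁ d₂)) ?_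
    apply Ideal.Quotient.ringHom_ext
    apply MvPolynomial.ringHom_ext
    · intro a
      exact AlgHom.congr_fun key (C a)
    · intro i
      exact AlgHom.congr_fun key (X i)
  exact AlgHom.ext fun x => RingHom.congr_fun h x

lemma hGF : (G p₁ p₂ d₁ d₂).comp (F p₁ p₂ d₁ d₂) = AlgHom.id ℂ Laurent2 := by
  apply AddMonoidAlgebra.algHom_ext
  intro s
  rw [AlgHom.comp_apply, F_single]
  have hmap : ∀ (u : (SLoc p₁ p₂ d₁ d₂)ˣ) (a : ℤ),
      G p₁ p₂ d₁ d₂ ((u ^ a : (SLoc p₁ p₂ d₁ d₂)ˣ) : SLoc p₁ p₂ d₁ d₂)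
        = ((Units.map (G p₁ p₂ d₁ d₂ : SLoc p₁ p₂ d₁ d₂ →* Laurent2) u ^ a : Laurent2ˣ)
            : Laurent2) := by
    intro u a
    rw [← map_zpow, Units.coe_map]
    rfl
  have hw0 : Units.map (G p₁ p₂ d₁ d₂ : SLoc p₁ p₂ d₁ d₂ →* Laurent2) (hx0 p₁ p₂ d₁ d₂).unit
      = unitsHom (Multiplicative.ofAdd ((1:ℤ),(0:ℤ))) := by
    apply Units.ext
    rw [Units.coe_map]
    show G p₁ p₂ d₁ d₂ ((hx0 p₁ p₂ d₁ d₂).unit : SLoc p₁ p₂ d₁ d₂) = _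
    rw [u0_spec, G_xim, unitsHom_coe]
    rfl
  have hw1 : Units.map (G p₁ p₂ d₁ d₂ : SLoc p₁ p₂ d₁ d₂ →* Laurent2) (hx1 p₁ p₂ d₁ d₂).unit
      = unitsHom (Multiplicative.ofAdd ((0:ℤ),(1:ℤ))) := by
    apply Units.ext
    rw [Units.coe_map]
    show G p₁ p₂ d₁ d₂ ((hx1 p₁ p₂ d₁ d₂).unit : SLoc p₁ p₂ d₁ d₂) = _
    rw [u1_spec, G_xim, unitsHom_coe]
    rfl
  rw [Units.val_mul, map_mul, hmap, hmap, hw0, hw1, unitsHom_zpow, unitsHom_zpow,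
    unitsHom_coe, unitsHom_coe, AddMonoidAlgebra.single_mul_single]
  simp only [Prod.smul_mk, smul_eq_mul, mul_one, mul_zero, smul_zero, Prod.mk_add_mk,
    add_zero, zero_add, mul_one, AlgHom.coe_id, id_eq, Prod.mk.eta]
  exact Subsingleton.elim _ _

end Stmt1Aux

theorem stmt_1 (p₁ p₂ : Polynomial ℂ) (hm₁ : p₁.Monic) (hm₂ : p₂.Monic)
    (d₁ d₂ : ℕ) (hd₁ : d₁ = p₁.natDegree + 1) (hd₂ : d₂ = p₂.natDegree + 1) :
    ∃ e : Laurent2 ≃ₐ[ℂ]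
        Localization.Away (Ideal.Quotient.mk (Ideal.span (srel p₁ p₂ d₁ d₂)) (X 0 * X 1)),
      -- v₁ ↦ x₁ and v₂ ↦ x₂
      e (single ((1 : ℤ), (0 : ℤ)) 1) =
        algebraMap (SRing p₁ p₂ d₁ d₂) _ (Ideal.Quotient.mk _ (X 0)) ∧
      e (single ((0 : ℤ), (1 : ℤ)) 1) =
        algebraMap (SRing p₁ p₂ d₁ d₂) _ (Ideal.Quotient.mk _ (X 1)) ∧
      -- inverse: x₁ ↦ v₁, x₂ ↦ v₂
      e.symm (algebraMap (SRing p₁ p₂ d₁ d₂) _ (Ideal.Quotient.mk _ (X 0))) =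
        single ((1 : ℤ), (0 : ℤ)) 1 ∧
      e.symm (algebraMap (SRing p₁ p₂ d₁ d₂) _ (Ideal.Quotient.mk _ (X 1))) =
        single ((0 : ℤ), (1 : ℤ)) 1 ∧
      -- inverse: y₁ ↦ (v₂ − p̂₁(v₁))·v₁^(−d₁), y₂ ↦ (v₁ − p̂₂(v₂))·v₂^(−d₂)
      e.symm (algebraMap (SRing p₁ p₂ d₁ d₂) _ (Ideal.Quotient.mk _ (X 2))) =
        (single ((0 : ℤ), (1 : ℤ)) 1 -
          Polynomial.aeval (single ((1 : ℤ), (0 : ℤ)) 1 : Laurent2) p₁.reverse) *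
          single (-(d₁ : ℤ), (0 : ℤ)) 1 ∧
      e.symm (algebraMap (SRing p₁ p₂ d₁ d₂) _ (Ideal.Quotient.mk _ (X 3))) =
        (single ((1 : ℤ), (0 : ℤ)) 1 -
          Polynomial.aeval (single ((0 : ℤ), (1 : ℤ)) 1 : Laurent2) p₂.reverse) *
          single ((0 : ℤ), -(d₂ : ℤ)) 1 := by
  refine ⟨AlgEquiv.ofAlgHom (Stmt1Aux.F p₁ p₂ d₁ d₂) (Stmt1Aux.G p₁ p₂ d₁ d₂)
    (Stmt1Aux.hFG p₁ p₂ d₁ d₂) (Stmt1Aux.hGF p₁ p₂ d₁ d₂), ?_, ?_, ?_, ?_, ?_, ?_⟩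
  · exact Stmt1Aux.F_v p₁ p₂ d₁ d₂ 0
  · exact Stmt1Aux.F_v p₁ p₂ d₁ d₂ 1
  · exact Stmt1Aux.G_xim p₁ p₂ d₁ d₂ 0
  · exact Stmt1Aux.G_xim p₁ p₂ d₁ d₂ 1
  · exact Stmt1Aux.G_xim p₁ p₂ d₁ d₂ 2
  · exact Stmt1Aux.G_xim p₁ p₂ d₁ d₂ 3
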